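/- arXiv:0704.2236 — 2 statements merged into one kernel-verified Lean document; each statement's English description precedes it below -/
import Mathlib

section
/- For any quantum state on A, A', B, B', C, C', E there holds S_3(AA':BB':CC'|E) = S_3(A:B:C|A'B'C'E) + S_3(A':B':C'|E) + I(AB:C'|A'B'E) + I(AC:B'|A'C'E) + I(BC:A'|B'C'E). -/
open scoped Classical ComplexOrder

/-- Von Neumann entropy of a matrix (via eigenvalues when Hermitian, 0 otherwise). -/
noncomputable def vNE {n : Type} [Fintype n] [DecidableEq n] (M : Matrix n n ℂ) : ℝ :=
  if h : M.IsHermitian then -∑ i, h.eigenvalues i * Real.log (h.eigenvalues i) else 0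

/-- Partial trace: the marginal of a multipartite matrix on the subsystems in `S`. -/
noncomputable def marg {ι : Type} [Fintype ι] [DecidableEq ι] {d : ι → Type}
    [∀ i, Fintype (d i)] [∀ i, DecidableEq (d i)]
    (ρ : Matrix (∀ i, d i) (∀ i, d i) ℂ) (S : Finset ι) :
    Matrix (∀ i : {j // j ∈ S}, d i.1) (∀ i : {j // j ∈ S}, d i.1) ℂ :=
  fun x y => ∑ z : ∀ i : {j // j ∉ S}, d i.1,
    ρ (fun i => if h : i ∈ S then x ⟨i, h⟩ else z ⟨i, h⟩)
      (fun i => if h : i ∈ S then y ⟨i, h⟩ else z ⟨i, h⟩)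

/-- Von Neumann entropy of the reduced state on the subsystems in `S`. -/
noncomputable def Sen {ι : Type} [Fintype ι] [DecidableEq ι] {d : ι → Type}
    [∀ i, Fintype (d i)] [∀ i, DecidableEq (d i)]
    (ρ : Matrix (∀ i, d i) (∀ i, d i) ℂ) (S : Finset ι) : ℝ :=
  vNE (marg ρ S)

/-- the chain identity
`S_3(AA':BB':CC'|E) = S_3(A:B:C|A'B'C'E) + S_3(A':B':C'|E) + I(AB:C'|A'B'E)
  + I(AC:B'|A'C'E) + I(BC:A'|B'C'E)`.
Systems are indexed by `Fin 7`: `0=A, 1=A', 2=B, 3=B', 4=C, 5=C', 6=E`. -/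
theorem conditional_dual_tripartite_chain_identity
    (d : Fin 7 → Type) [∀ i, Fintype (d i)] [∀ i, DecidableEq (d i)]
    (ρ : Matrix (∀ i, d i) (∀ i, d i) ℂ)
    (hρ : ρ.PosSemidef) (hTr : ρ.trace = 1) :
    Sen ρ {0, 1, 2, 3, 6} + Sen ρ {2, 3, 4, 5, 6} + Sen ρ {0, 1, 4, 5, 6}
        - 2 * Sen ρ Finset.univ - Sen ρ {6}
      = (Sen ρ {0, 1, 2, 3, 5, 6} + Sen ρ {1, 2, 3, 4, 5, 6} + Sen ρ {0, 1, 3, 4, 5, 6}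
          - 2 * Sen ρ Finset.univ - Sen ρ {1, 3, 5, 6})
        + (Sen ρ {1, 3, 6} + Sen ρ {3, 5, 6} + Sen ρ {1, 5, 6}
            - 2 * Sen ρ {1, 3, 5, 6} - Sen ρ {6})
        + (Sen ρ {0, 1, 2, 3, 6} + Sen ρ {1, 3, 5, 6}
            - Sen ρ {0, 1, 2, 3, 5, 6} - Sen ρ {1, 3, 6})
        + (Sen ρ {0, 1, 4, 5, 6} + Sen ρ {1, 3, 5, 6}
            - Sen ρ {0, 1, 3, 4, 5, 6} - Sen ρ {1, 5, 6})
        + (Sen ρ {2, 3, 4, 5, 6} + Sen ρ {1, 3, 5, 6}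
            - Sen ρ {1, 2, 3, 4, 5, 6} - Sen ρ {3, 5, 6}) := by
  ring
end

section
/- Let g be a continuous real-valued function on density matrices that is monotone on average under a given measurement, i.e. for every state σ, g(σ) ≥ Σ_k q_k g(σ_k), where {q_k, σ_k} is the ensemble produced by the measurement on σ. Then its mixed convex roof E_g(ρ) := inf{ Σ_i p_i g(ρ_i) : Σ_i p_i ρ_i = ρ, p a finite probability distribution, ρ_i density matrices } also satisfies E_g(ρ) ≥ Σ_k q_k E_g(ρ_k) for every state ρ, where {q_k, ρ_k} is the ensemble produced by the measurement on ρ. -/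
open scoped Classical ComplexOrder

/-- `{p i, σs i}` is a finite ensemble of density matrices averaging to `ρ`. -/
def IsEnsemble {n : Type} [Fintype n] [DecidableEq n] {k : ℕ}
    (p : Fin k → ℝ) (σs : Fin k → Matrix n n ℂ) (ρ : Matrix n n ℂ) : Prop :=
  (∀ i, 0 ≤ p i) ∧ (∑ i, p i = 1) ∧
  (∀ i, (σs i).PosSemidef ∧ (σs i).trace = 1) ∧
  (∑ i, (p i : ℂ) • σs i) = ρ

/-- The mixed convex roof of `g`: the infimum of `Σ p_i g(ρ_i)` over all finite
decompositions of `ρ` into density matrices. -/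
noncomputable def mixedRoof {n : Type} [Fintype n] [DecidableEq n]
    (g : Matrix n n ℂ → ℝ) (ρ : Matrix n n ℂ) : ℝ :=
  sInf { r | ∃ (k : ℕ) (p : Fin k → ℝ) (σs : Fin k → Matrix n n ℂ),
    IsEnsemble p σs ρ ∧ r = ∑ i, p i * g (σs i) }

section AuxLemmas

open Matrix

variable {n : Type} [Fintype n] [DecidableEq n]

variable {n : Type} [Fintype n] [DecidableEq n]

lemma psd_diag_nonneg {M : Matrix n n ℂ} (hM : M.PosSemidef) (i : n) : 0 ≤ M i i := by
  have h := hM.dotProduct_mulVec_nonneg (Pi.single i 1)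
  simpa [dotProduct, Matrix.mulVec, Pi.single_apply, Finset.sum_ite_eq,
    Finset.sum_ite_eq', mul_comm] using h

lemma psd_trace_nonneg {M : Matrix n n ℂ} (hM : M.PosSemidef) : 0 ≤ M.trace :=
  Finset.sum_nonneg fun i _ => psd_diag_nonneg hM i

lemma psd_trace_eq_re {M : Matrix n n ℂ} (hM : M.PosSemidef) :
    M.trace = (M.trace.re : ℂ) := by
  have h := (Complex.nonneg_iff.mp (psd_trace_nonneg hM)).2
  exact Complex.ext (by simp) (by simp [← h])

lemma psd_trace_re_nonneg {M : Matrix n n ℂ} (hM : M.PosSemidef) : 0 ≤ M.trace.re :=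
  (Complex.nonneg_iff.mp (psd_trace_nonneg hM)).1

lemma psd_smul {M : Matrix n n ℂ} (hM : M.PosSemidef) {c : ℝ} (hc : 0 ≤ c) :
    ((c : ℂ) • M).PosSemidef := by
  rw [Matrix.posSemidef_iff_dotProduct_mulVec]
  constructor
  · show ((c : ℂ) • M)ᴴ = _
    rw [Matrix.conjTranspose_smul, hM.1.eq]
    simp [Complex.conj_ofReal]
  · intro x
    have h := hM.dotProduct_mulVec_nonneg x
    have : star x ⬝ᵥ ((c : ℂ) • M) *ᵥ x = (c : ℂ) * (star x ⬝ᵥ M *ᵥ x) := by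
      simp [Matrix.smul_mulVec, dotProduct_smul, smul_eq_mul]
    rw [this]
    exact mul_nonneg (Complex.zero_le_real.mpr hc) h

lemma psd_entry_le {M : Matrix n n ℂ} (hM : M.PosSemidef) (i j : n) :
    ‖M i j‖ ≤ Real.sqrt (M i i).re * Real.sqrt (M j j).re := by
  obtain ⟨B, rfl⟩ : ∃ B : Matrix n n ℂ, M = Bᴴ * B := by
    open scoped MatrixOrder in
    exact CStarAlgebra.nonneg_iff_eq_star_mul_self.mp hM.nonneg
  let col : n → EuclideanSpace ℂ n := fun a => WithLp.toLp 2 (fun k => B k a)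
  have hij : ∀ a b : n, (Bᴴ * B) a b = inner (𝕜 := ℂ) (col a) (col b) := by
    intro a b
    simp [Matrix.mul_apply, Matrix.conjTranspose_apply, PiLp.inner_apply, RCLike.inner_apply, col, mul_comm]
  have hnu : ∀ a : n, ‖col a‖ = Real.sqrt ((Bᴴ * B) a a).re := by
    intro a
    rw [norm_eq_sqrt_re_inner (𝕜 := ℂ), hij a a]
    rfl
  calc ‖(Bᴴ * B) i j‖ = ‖inner (𝕜 := ℂ) (col i) (col j)‖ := by rw [hij]
    _ ≤ ‖col i‖ * ‖col j‖ := norm_inner_le_norm _ _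
    _ = Real.sqrt ((Bᴴ * B) i i).re * Real.sqrt ((Bᴴ * B) j j).re := by rw [hnu, hnu]

lemma psd_trace_re_zero {M : Matrix n n ℂ} (hM : M.PosSemidef) (h : M.trace.re = 0) :
    M = 0 := by
  have hdiag : ∀ i, (M i i).re = 0 := by
    intro i
    have hsum : ∑ i, (M i i).re = 0 := by
      rw [← Complex.re_sum]; exact h
    exact (Finset.sum_eq_zero_iff_of_nonneg (fun i _ =>
      (Complex.nonneg_iff.mp (psd_diag_nonneg hM i)).1)).mp hsum i (Finset.mem_univ i)
  ext i j
  have := psd_entry_le hM i j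
  rw [hdiag i, hdiag j, Real.sqrt_zero, mul_zero] at this
  simpa using norm_le_zero_iff.mp this

lemma density_isCompact : IsCompact {M : Matrix n n ℂ | M.PosSemidef ∧ M.trace = 1} := by
  have hclosed : IsClosed {M : Matrix n n ℂ | M.PosSemidef ∧ M.trace = 1} := by
    have h1 : IsClosed {M : Matrix n n ℂ | Mᴴ = M} :=
      isClosed_eq (continuous_id.matrix_conjTranspose) continuous_id
    have hc : IsClosed {z : ℂ | 0 ≤ z} := by
      have h : {z : ℂ | 0 ≤ z} = {z : ℂ | 0 ≤ z.re} ∩ {z : ℂ | 0 = z.im} := by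
        ext z; exact Complex.nonneg_iff
      rw [h]
      exact (isClosed_le continuous_const Complex.continuous_re).inter
        (isClosed_eq continuous_const Complex.continuous_im)
    have h2 : ∀ x : n → ℂ, IsClosed {M : Matrix n n ℂ | 0 ≤ star x ⬝ᵥ M *ᵥ x} := by
      intro x
      exact IsClosed.preimage
        (Continuous.dotProduct continuous_const
          (continuous_id.matrix_mulVec continuous_const)) hc
    have h3 : IsClosed {M : Matrix n n ℂ | M.trace = 1} :=
      isClosed_eq (continuous_id.matrix_trace) continuous_const
    have heq : {M : Matrix n n ℂ | M.PosSemidef ∧ M.trace = 1}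
        = ({M : Matrix n n ℂ | Mᴴ = M} ∩ ⋂ x : n → ℂ,
            {M : Matrix n n ℂ | 0 ≤ star x ⬝ᵥ M *ᵥ x})
          ∩ {M : Matrix n n ℂ | M.trace = 1} := by
      ext M
      simp only [Set.mem_setOf_eq, Set.mem_inter_iff, Set.mem_iInter, Matrix.posSemidef_iff_dotProduct_mulVec,
        Matrix.IsHermitian]
    rw [heq]
    exact ((h1.inter (isClosed_iInter h2)).inter h3)
  have hsub : {M : Matrix n n ℂ | M.PosSemidef ∧ M.trace = 1} ⊆
      Set.univ.pi (fun _ : n => Set.univ.pi fun _ : n => Metric.closedBall (0:ℂ) 1) := by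
    rintro M ⟨hM, htr⟩
    refine Set.mem_univ_pi.mpr ?_
    intro i
    rw [Set.mem_univ_pi]
    intro j
    simp only [Metric.mem_closedBall, dist_zero_right]
    have hd : ∀ a, (M a a).re ≤ 1 := by
      intro a
      have h : (M a a).re ≤ ∑ b, (M b b).re :=
        Finset.single_le_sum (fun b _ => (Complex.nonneg_iff.mp (psd_diag_nonneg hM b)).1)
          (Finset.mem_univ a)
      have htr' : ∑ b, (M b b).re = 1 := by
        have h1 : (M.trace).re = 1 := by rw [htr]; simp
        rw [← h1]
        simp [Matrix.trace, Matrix.diag, Complex.re_sum]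
      rwa [htr'] at h
    calc ‖M i j‖ ≤ Real.sqrt (M i i).re * Real.sqrt (M j j).re := psd_entry_le hM i j
      _ ≤ 1 * 1 :=
          mul_le_mul (Real.sqrt_le_one.mpr (hd i)) (Real.sqrt_le_one.mpr (hd j))
            (Real.sqrt_nonneg _) zero_le_one
      _ = 1 := one_mul 1
  exact IsCompact.of_isClosed_subset
    (isCompact_univ_pi fun _ => isCompact_univ_pi fun _ => isCompact_closedBall _ _) hclosed hsub

end AuxLemmas

/-- if a continuous function `g` is monotone on average under a
given measurement (described by the linear subensemble maps `Φ k`, with outcome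
probabilities `q_k = Tr(Φ k σ)` and post-measurement states `q_k⁻¹ • Φ k σ`),
then its mixed convex roof `E_g` is also monotone on average under this
measurement. The attainment of the infimum by a finite ensemble (guaranteed by
continuity of `g`) is taken as a hypothesis. -/

theorem mixedRoof_monotone_on_average {n : Type} [Fintype n] [DecidableEq n]
    (g : Matrix n n ℂ → ℝ) (hcont : Continuous g)
    (K : ℕ) (Φ : Fin K → Matrix n n ℂ →ₗ[ℂ] Matrix n n ℂ)
    (hΦpos : ∀ σ : Matrix n n ℂ, σ.PosSemidef → σ.trace = 1 →
      ∀ k, (Φ k σ).PosSemidef)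
    (hΦtr : ∀ σ : Matrix n n ℂ, σ.PosSemidef → σ.trace = 1 →
      ∑ k, (Φ k σ).trace = 1)
    (hg : ∀ σ : Matrix n n ℂ, σ.PosSemidef → σ.trace = 1 →
      ∑ k, (Φ k σ).trace.re * g (((((Φ k σ).trace.re)⁻¹ : ℝ) : ℂ) • Φ k σ) ≤ g σ)
    (hattain : ∀ ρ : Matrix n n ℂ, ρ.PosSemidef → ρ.trace = 1 →
      ∃ (k : ℕ) (p : Fin k → ℝ) (σs : Fin k → Matrix n n ℂ),
        IsEnsemble p σs ρ ∧ mixedRoof g ρ = ∑ i, p i * g (σs i))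
    (ρ : Matrix n n ℂ) (hρ : ρ.PosSemidef) (hρ1 : ρ.trace = 1) :
    ∑ k, (Φ k ρ).trace.re *
        mixedRoof g (((((Φ k ρ).trace.re)⁻¹ : ℝ) : ℂ) • Φ k ρ)
      ≤ mixedRoof g ρ := by
  
  classical
  obtain ⟨M₀, hM₀D, hmin⟩ := density_isCompact.exists_isMinOn ⟨ρ, hρ, hρ1⟩ hcont.continuousOn
  have hbdd : ∀ ρ' : Matrix n n ℂ, BddBelow { r | ∃ (k : ℕ) (p : Fin k → ℝ)
      (σs : Fin k → Matrix n n ℂ), IsEnsemble p σs ρ' ∧ r = ∑ i, p i * g (σs i) } := by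
    intro ρ'
    refine ⟨g M₀, ?_⟩
    rintro r ⟨N, p, σs, ⟨hp0, hp1, hσ, -⟩, rfl⟩
    calc g M₀ = ∑ i, p i * g M₀ := by rw [← Finset.sum_mul, hp1, one_mul]
      _ ≤ ∑ i, p i * g (σs i) := Finset.sum_le_sum fun i _ =>
          mul_le_mul_of_nonneg_left (hmin ⟨(hσ i).1, (hσ i).2⟩) (hp0 i)
  obtain ⟨N, p, σs, ⟨hp0, hp1, hσ, hsum⟩, hval⟩ := hattain ρ hρ hρ1
  rw [hval]
  have hΦσpsd : ∀ (i : Fin N) k, (Φ k (σs i)).PosSemidef :=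
    fun i k => hΦpos _ (hσ i).1 (hσ i).2 k
  have hΦρpsd : ∀ k, (Φ k ρ).PosSemidef := fun k => hΦpos ρ hρ hρ1 k
  have htnn : ∀ (i : Fin N) k, 0 ≤ (Φ k (σs i)).trace.re :=
    fun i k => psd_trace_re_nonneg (hΦσpsd i k)
  have hqnn : ∀ k, 0 ≤ (Φ k ρ).trace.re := fun k => psd_trace_re_nonneg (hΦρpsd k)
  have hΦρ : ∀ k, Φ k ρ = ∑ i, (p i : ℂ) • Φ k (σs i) := by
    intro k
    rw [← hsum, map_sum]
    exact Finset.sum_congr rfl fun i _ => (Φ k).map_smul _ _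
  have hqt : ∀ k, (Φ k ρ).trace.re = ∑ i, p i * (Φ k (σs i)).trace.re := by
    intro k
    rw [hΦρ k, Matrix.trace_sum, Complex.re_sum]
    refine Finset.sum_congr rfl fun i _ => ?_
    rw [Matrix.trace_smul]
    simp [Complex.mul_re]
  have key : ∀ k, (Φ k ρ).trace.re *
      mixedRoof g (((((Φ k ρ).trace.re)⁻¹ : ℝ) : ℂ) • Φ k ρ)
      ≤ ∑ i, p i * ((Φ k (σs i)).trace.re *
          g (((((Φ k (σs i)).trace.re)⁻¹ : ℝ) : ℂ) • Φ k (σs i))) := by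
    intro k
    rcases eq_or_lt_of_le (hqnn k) with h0 | hpos
    · -- zero-probability outcome
      have hs : ∑ i, p i * (Φ k (σs i)).trace.re = 0 := by rw [← hqt k, ← h0]
      have hz : ∀ i ∈ Finset.univ, p i * (Φ k (σs i)).trace.re = 0 :=
        (Finset.sum_eq_zero_iff_of_nonneg
          (fun i _ => mul_nonneg (hp0 i) (htnn i k))).mp hs
      rw [← h0, zero_mul]
      refine le_of_eq (Finset.sum_eq_zero fun i _ => ?_).symm
      rcases mul_eq_zero.mp (hz i (Finset.mem_univ i)) with h | h
      · rw [h, zero_mul]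
      · rw [h]; ring
    · -- positive-probability outcome
      have hqne : (Φ k ρ).trace.re ≠ 0 := ne_of_gt hpos
      have hρkpsd : ((((((Φ k ρ).trace.re)⁻¹ : ℝ) : ℂ)) • Φ k ρ).PosSemidef :=
        psd_smul (hΦρpsd k) (inv_nonneg.mpr (hqnn k))
      have hρktr : ((((((Φ k ρ).trace.re)⁻¹ : ℝ) : ℂ)) • Φ k ρ).trace = 1 := by
        rw [Matrix.trace_smul, smul_eq_mul, psd_trace_eq_re (hΦρpsd k)]
        simp only [Complex.ofReal_re]
        rw [← Complex.ofReal_mul, inv_mul_cancel₀ hqne, Complex.ofReal_one]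
      have hens : IsEnsemble
          (fun i => p i * (Φ k (σs i)).trace.re * ((Φ k ρ).trace.re)⁻¹)
          (fun i => if h : (Φ k (σs i)).trace.re = 0 then σs i
            else ((((Φ k (σs i)).trace.re)⁻¹ : ℝ) : ℂ) • Φ k (σs i))
          (((((Φ k ρ).trace.re)⁻¹ : ℝ) : ℂ) • Φ k ρ) := by
        refine ⟨fun i => mul_nonneg (mul_nonneg (hp0 i) (htnn i k))
            (inv_nonneg.mpr (hqnn k)), ?_, ?_, ?_⟩
        · simp only []
          rw [← Finset.sum_mul, ← hqt k]
          exact mul_inv_cancel₀ hqne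
        · intro i
          simp only []
          by_cases h : (Φ k (σs i)).trace.re = 0
          · simpa [h] using hσ i
          · rw [dif_neg h]
            refine ⟨psd_smul (hΦσpsd i k) (inv_nonneg.mpr (htnn i k)), ?_⟩
            rw [Matrix.trace_smul, smul_eq_mul, psd_trace_eq_re (hΦσpsd i k)]
            simp only [Complex.ofReal_re]
            rw [← Complex.ofReal_mul, inv_mul_cancel₀ h, Complex.ofReal_one]
        · have hterm : ∀ i : Fin N,
              ((p i * (Φ k (σs i)).trace.re * ((Φ k ρ).trace.re)⁻¹ : ℝ) : ℂ) •
                (if h : (Φ k (σs i)).trace.re = 0 then σs i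
                  else ((((Φ k (σs i)).trace.re)⁻¹ : ℝ) : ℂ) • Φ k (σs i))
              = ((((Φ k ρ).trace.re)⁻¹ : ℝ) : ℂ) • ((p i : ℂ) • Φ k (σs i)) := by
            intro i
            by_cases h : (Φ k (σs i)).trace.re = 0
            · have hz : Φ k (σs i) = 0 := psd_trace_re_zero (hΦσpsd i k) h
              simp [h, hz]
            · rw [dif_neg h, smul_smul, smul_smul]
              congr 1
              push_cast
              field_simp
          simp only []
          calc ∑ i, ((p i * (Φ k (σs i)).trace.re * ((Φ k ρ).trace.re)⁻¹ : ℝ) : ℂ) •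
                (if h : (Φ k (σs i)).trace.re = 0 then σs i
                  else ((((Φ k (σs i)).trace.re)⁻¹ : ℝ) : ℂ) • Φ k (σs i))
              = ∑ i, ((((Φ k ρ).trace.re)⁻¹ : ℝ) : ℂ) • ((p i : ℂ) • Φ k (σs i)) :=
                Finset.sum_congr rfl fun i _ => hterm i
            _ = ((((Φ k ρ).trace.re)⁻¹ : ℝ) : ℂ) • Φ k ρ := by
                rw [← Finset.smul_sum, ← hΦρ k]
      have hmem : (∑ i, (p i * (Φ k (σs i)).trace.re * ((Φ k ρ).trace.re)⁻¹) *
            g (if h : (Φ k (σs i)).trace.re = 0 then σs i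
              else ((((Φ k (σs i)).trace.re)⁻¹ : ℝ) : ℂ) • Φ k (σs i)))
          ∈ { r | ∃ (k' : ℕ) (p' : Fin k' → ℝ) (σs' : Fin k' → Matrix n n ℂ),
              IsEnsemble p' σs' (((((Φ k ρ).trace.re)⁻¹ : ℝ) : ℂ) • Φ k ρ) ∧
              r = ∑ i, p' i * g (σs' i) } :=
        ⟨N, _, _, hens, rfl⟩
      have hle : mixedRoof g (((((Φ k ρ).trace.re)⁻¹ : ℝ) : ℂ) • Φ k ρ)
          ≤ ∑ i, (p i * (Φ k (σs i)).trace.re * ((Φ k ρ).trace.re)⁻¹) *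
            g (if h : (Φ k (σs i)).trace.re = 0 then σs i
              else ((((Φ k (σs i)).trace.re)⁻¹ : ℝ) : ℂ) • Φ k (σs i)) :=
        csInf_le (hbdd _) hmem
      calc (Φ k ρ).trace.re * mixedRoof g (((((Φ k ρ).trace.re)⁻¹ : ℝ) : ℂ) • Φ k ρ)
          ≤ (Φ k ρ).trace.re * ∑ i, (p i * (Φ k (σs i)).trace.re * ((Φ k ρ).trace.re)⁻¹) *
              g (if h : (Φ k (σs i)).trace.re = 0 then σs i
                else ((((Φ k (σs i)).trace.re)⁻¹ : ℝ) : ℂ) • Φ k (σs i)) :=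
            mul_le_mul_of_nonneg_left hle (hqnn k)
        _ = ∑ i, p i * ((Φ k (σs i)).trace.re *
              g (((((Φ k (σs i)).trace.re)⁻¹ : ℝ) : ℂ) • Φ k (σs i))) := by
            rw [Finset.mul_sum]
            refine Finset.sum_congr rfl fun i _ => ?_
            by_cases h : (Φ k (σs i)).trace.re = 0
            · simp [h]
            · rw [dif_neg h]
              field_simp
  calc ∑ k, (Φ k ρ).trace.re * mixedRoof g (((((Φ k ρ).trace.re)⁻¹ : ℝ) : ℂ) • Φ k ρ)
      ≤ ∑ k, ∑ i, p i * ((Φ k (σs i)).trace.re *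
          g (((((Φ k (σs i)).trace.re)⁻¹ : ℝ) : ℂ) • Φ k (σs i))) :=
        Finset.sum_le_sum fun k _ => key k
    _ = ∑ i, p i * ∑ k, (Φ k (σs i)).trace.re *
          g (((((Φ k (σs i)).trace.re)⁻¹ : ℝ) : ℂ) • Φ k (σs i)) := by
        rw [Finset.sum_comm]
        exact Finset.sum_congr rfl fun i _ => (Finset.mul_sum _ _ _).symm
    _ ≤ ∑ i, p i * g (σs i) := Finset.sum_le_sum fun i _ =>
        mul_le_mul_of_nonneg_left (hg (σs i) (hσ i).1 (hσ i).2) (hp0 i)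
end
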